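/- For all real p ≥ 3, integers a ≥ 1, and real x ≥ p^{a+1} with x ≥ 2.3×10¹³: (1 − (a/(a+1))·(1/(1.000529²·x)))·(1 − 1/(p^{a+1}+p^a+⋯+1))·(1 + 1/x) < 1, provided p^{a+1} ≤ x. -/

import Mathlib

set_option maxHeartbeats 1000000


theorem stmt_19 (p x : ℝ) (a : ℕ) (hp : p ≥ 3) (ha : 1 ≤ a)
    (hx : x ≥ 2.3e13) (hpa : p ^ (a + 1) ≤ x) :
    (1 - ((a : ℝ) / ((a : ℝ) + 1)) * (1 / (1.000529 ^ 2 * x))) *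
        (1 - 1 / (∑ j ∈ Finset.range (a + 2), p ^ j)) * (1 + 1 / x) < 1 := by
  have hx0 : (0:ℝ) < x := by nlinarith
  have hp0 : (0:ℝ) < p := by linarith
  have hp1 : p ≠ 1 := by linarith
  have hpow : (0:ℝ) < p ^ (a+1) := pow_pos hp0 _
  set S : ℝ := ∑ j ∈ Finset.range (a + 2), p ^ j with hSdef
  have hSval : S = (p ^ (a+2) - 1) / (p - 1) := by
    rw [hSdef, geom_sum_eq hp1]
  have hpm1 : (0:ℝ) < p - 1 := by linarith
  have hSle : S ≤ 3/2 * x := by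
    rw [hSval, div_le_iff₀ hpm1]
    have h1 : p ^ (a+2) = p * p ^ (a+1) := by ring
    nlinarith [mul_le_mul_of_nonneg_left hpa hp0.le, mul_nonneg hx0.le (by linarith : (0:ℝ) ≤ p - 3)]
  have h3p : (3:ℝ) ≤ p ^ (a+1) := by
    calc (3:ℝ) = 3 ^ 1 := by norm_num
    _ ≤ 3 ^ (a+1) := by
      apply pow_le_pow_right₀ (by norm_num) (by omega)
    _ ≤ p ^ (a+1) := pow_le_pow_left₀ (by norm_num) hp _
  have hS1 : 1 < S := by
    rw [hSval, lt_div_iff₀ hpm1]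
    have h1 : p ^ (a+2) = p * p ^ (a+1) := by ring
    nlinarith
  have hS0 : (0:ℝ) < S := by linarith
  have ha1 : (1:ℝ) ≤ (a:ℝ) := by exact_mod_cast ha
  set c : ℝ := (a:ℝ)/((a:ℝ)+1) * (1 / 1.000529 ^ 2) with hcdef
  have hA : 1/2 ≤ (a:ℝ)/((a:ℝ)+1) := by
    rw [le_div_iff₀ (by linarith)]; linarith
  have hA1 : (a:ℝ)/((a:ℝ)+1) < 1 := by
    rw [div_lt_one (by linarith)]; linarith
  have hc13 : 1/3 ≤ c := by
    rw [hcdef]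
    nlinarith [hA]
  have hc1 : c < 1 := by
    rw [hcdef]
    nlinarith [hA1, hA]
  have hrw : ((a : ℝ) / ((a : ℝ) + 1)) * (1 / (1.000529 ^ 2 * x)) = c / x := by
    rw [hcdef]
    field_simp
  rw [hrw]
  have e1 : 1 - c/x = (x - c)/x := by field_simp
  have e2 : 1 - 1/S = (S - 1)/S := by field_simp
  have e3 : 1 + 1/x = (x + 1)/x := by field_simp
  rw [e1, e2, e3]
  rw [div_mul_div_comm, div_mul_div_comm, div_lt_one (by positivity)]
  -- goal : (x - c) * (S - 1) * (x + 1) < x * S * x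
  have key : (1 - c) * x * S ≤ x * x := by
    nlinarith [mul_le_mul_of_nonneg_left hSle (by nlinarith : (0:ℝ) ≤ (1-c) * x)]
  nlinarith [key, mul_pos (by linarith : (0:ℝ) < c) (by linarith : (0:ℝ) < S - 1),
    mul_nonneg (by linarith : (0:ℝ) ≤ 1 - c) hx0.le]
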